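/- Let λ, μ, ω ∈ ℝ with μ > 0, λ + 2μ > 0, let Ω ⊆ ℝ³ be open, let 𝐮 = (u, v, w) : Ω → ℂ³ be C³ and 𝐟 = (f₁, f₂, f₃) : Ω → ℂ³ be C¹. Assume that in Ω the 3D time-harmonic elasticity equation holds componentwise: μΔ𝐮 + (λ+μ)∇(∂ₓu + ∂_y v + ∂_z w) + ω²𝐮 = −𝐟. Then α := ∂ₓ u + ∂_y v and w satisfy, in Ω, the coupled system: (λ+2μ)Δ₂α + μ∂_zz α + ω²α + (λ+μ)Δ₂(∂_z w) = −(∂ₓ f₁ + ∂_y f₂), and (λ+μ)∂_z α + (λ+2μ)∂_zz w + μΔ₂ w + ω² w = −f₃, where Δ₂g = ∂ₓₓg + ∂_yy g. -/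

import Mathlib

open Complex Set

noncomputable section AuxSec

abbrev P3 := ℝ × ℝ × ℝ

lemma pdAux_contDiffAt {n : WithTop ℕ∞} {f : P3 → ℂ} {p : P3}
    (hf : ContDiffAt ℝ (n+1) f p) (a : P3) :
    ContDiffAt ℝ n (fun q => fderiv ℝ f q a) p := by
  have h1 : ContDiffAt ℝ n (fderiv ℝ f) p := hf.fderiv_right le_rfl
  exact (ContinuousLinearMap.apply ℝ ℂ a).contDiff.contDiffAt.comp p h1

lemma cd1_of_cd2 {f : P3 → ℂ} {p : P3} (hf : ContDiffAt ℝ 2 f p) (a : P3) :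
    ContDiffAt ℝ 1 (fun q => fderiv ℝ f q a) p := by
  have : ((1:WithTop ℕ∞)+1) = 2 := by norm_num
  exact pdAux_contDiffAt (n := 1) (by rw [this]; exact hf) a

lemma cd2_of_cd3 {f : P3 → ℂ} {p : P3} (hf : ContDiffAt ℝ 3 f p) (a : P3) :
    ContDiffAt ℝ 2 (fun q => fderiv ℝ f q a) p := by
  have : ((2:WithTop ℕ∞)+1) = 3 := by norm_num
  exact pdAux_contDiffAt (n := 2) (by rw [this]; exact hf) a

lemma pdAux_comm {f : P3 → ℂ} {p : P3} (hf : ContDiffAt ℝ 2 f p) (a b : P3) :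
    fderiv ℝ (fun q => fderiv ℝ f q a) p b = fderiv ℝ (fun q => fderiv ℝ f q b) p a := by
  have hd : DifferentiableAt ℝ (fderiv ℝ f) p :=
    (hf.fderiv_right (m := 1) (by norm_num)).differentiableAt (by norm_num)
  have hsym := hf.isSymmSndFDerivAt (by simp [minSmoothness_of_isRCLikeNormedField])
  have key : ∀ c : P3, fderiv ℝ (fun q => fderiv ℝ f q c) p
      = ((fderiv ℝ (fderiv ℝ f) p).flip c) := by
    intro c
    have hc : HasFDerivAt (fun q => (ContinuousLinearMap.apply ℝ ℂ c) (fderiv ℝ f q))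
        ((ContinuousLinearMap.apply ℝ ℂ c).comp (fderiv ℝ (fderiv ℝ f) p)) p :=
      (ContinuousLinearMap.apply ℝ ℂ c).hasFDerivAt.comp p hd.hasFDerivAt
    exact hc.fderiv
  rw [key a, key b]
  simpa using hsym b a

lemma pd_congr_on {Ω : Set P3} (hΩ : IsOpen Ω) {f g : P3 → ℂ} {p : P3} (hp : p ∈ Ω)
    (h : ∀ q ∈ Ω, f q = g q) (a : P3) : fderiv ℝ f p a = fderiv ℝ g p a := by
  rw [Filter.EventuallyEq.fderiv_eq (Filter.eventuallyEq_of_mem (hΩ.mem_nhds hp) h)]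

lemma pd_add {f g : P3 → ℂ} {p : P3} (hf : DifferentiableAt ℝ f p)
    (hg : DifferentiableAt ℝ g p) (a : P3) :
    fderiv ℝ (fun q => f q + g q) p a = fderiv ℝ f p a + fderiv ℝ g p a := by
  rw [fderiv_fun_add hf hg]; rfl

lemma pd_neg (f : P3 → ℂ) (p a : P3) :
    fderiv ℝ (fun q => -(f q)) p a = -(fderiv ℝ f p a) := by
  rw [fderiv_fun_neg]; rfl

/-- Expansion of the derivative of the elasticity-equation left-hand side. -/
lemma pd_elas {g1 g2 g3 g4 g5 : P3 → ℂ} {p : P3} (c1 c2 c3 : ℂ)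
    (h1 : DifferentiableAt ℝ g1 p) (h2 : DifferentiableAt ℝ g2 p)
    (h3 : DifferentiableAt ℝ g3 p) (h4 : DifferentiableAt ℝ g4 p)
    (h5 : DifferentiableAt ℝ g5 p) (a : P3) :
    fderiv ℝ (fun q => c1 * (g1 q + g2 q + g3 q) + c2 * g4 q + c3 * g5 q) p a
      = c1 * (fderiv ℝ g1 p a + fderiv ℝ g2 p a + fderiv ℝ g3 p a)
        + c2 * fderiv ℝ g4 p a + c3 * fderiv ℝ g5 p a := by
  have H : HasFDerivAt (fun q => c1 * (g1 q + g2 q + g3 q) + c2 * g4 q + c3 * g5 q)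
      ((c1 • ((fderiv ℝ g1 p + fderiv ℝ g2 p) + fderiv ℝ g3 p)
        + c2 • fderiv ℝ g4 p) + c3 • fderiv ℝ g5 p) p :=
    ((((h1.hasFDerivAt.add h2.hasFDerivAt).add h3.hasFDerivAt).const_mul c1).add
      (h4.hasFDerivAt.const_mul c2)).add (h5.hasFDerivAt.const_mul c3)
  rw [H.fderiv]
  simp [ContinuousLinearMap.add_apply, ContinuousLinearMap.smul_apply, smul_eq_mul]
  ring

lemma pd2_add {Ω : Set P3} (hΩ : IsOpen Ω) {f g : P3 → ℂ}
    (hf : ∀ q ∈ Ω, ContDiffAt ℝ 2 f q) (hg : ∀ q ∈ Ω, ContDiffAt ℝ 2 g q)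
    {p : P3} (hp : p ∈ Ω) (a b : P3) :
    fderiv ℝ (fun q => fderiv ℝ (fun r => f r + g r) q a) p b
      = fderiv ℝ (fun q => fderiv ℝ f q a) p b + fderiv ℝ (fun q => fderiv ℝ g q a) p b := by
  have h1 : ∀ q ∈ Ω, fderiv ℝ (fun r => f r + g r) q a = fderiv ℝ f q a + fderiv ℝ g q a :=
    fun q hq => pd_add ((hf q hq).differentiableAt (by norm_num))
      ((hg q hq).differentiableAt (by norm_num)) a
  rw [pd_congr_on hΩ hp h1 b]
  exact pd_add ((cd1_of_cd2 (hf p hp) a).differentiableAt (by norm_num))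
    ((cd1_of_cd2 (hg p hp) a).differentiableAt (by norm_num)) b

/-- Swap the two outer derivatives of a third derivative. -/
lemma T_swap_outer {f : P3 → ℂ} {p : P3} (hf : ContDiffAt ℝ 3 f p) (a b c : P3) :
    fderiv ℝ (fun q => fderiv ℝ (fun r => fderiv ℝ f r a) q b) p c
      = fderiv ℝ (fun q => fderiv ℝ (fun r => fderiv ℝ f r a) q c) p b :=
  pdAux_comm (cd2_of_cd3 hf a) b c

/-- Swap the two inner derivatives of a third derivative. -/
lemma T_swap_inner {Ω : Set P3} (hΩ : IsOpen Ω) {f : P3 → ℂ}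
    (hf : ∀ q ∈ Ω, ContDiffAt ℝ 3 f q) {p : P3} (hp : p ∈ Ω) (a b c : P3) :
    fderiv ℝ (fun q => fderiv ℝ (fun r => fderiv ℝ f r a) q b) p c
      = fderiv ℝ (fun q => fderiv ℝ (fun r => fderiv ℝ f r b) q a) p c := by
  refine pd_congr_on hΩ hp (fun q hq => ?_) c
  exact pdAux_comm ((hf q hq).of_le (by norm_num)) a b

/-- `∂ₐ∂_b∂_b f = ∂_b∂_b∂ₐ f` (the permutation we need). -/
lemma T_rot {Ω : Set P3} (hΩ : IsOpen Ω) {f : P3 → ℂ}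
    (hf : ∀ q ∈ Ω, ContDiffAt ℝ 3 f q) {p : P3} (hp : p ∈ Ω) (a b : P3) :
    fderiv ℝ (fun q => fderiv ℝ (fun r => fderiv ℝ f r a) q b) p b
      = fderiv ℝ (fun q => fderiv ℝ (fun r => fderiv ℝ f r b) q b) p a := by
  rw [T_swap_inner hΩ hf hp a b b, T_swap_outer (hf p hp) b a b]

end AuxSec

/-- Partial derivative in the `x` direction of a function on `ℝ³`. -/
noncomputable def pdx3 (f : ℝ × ℝ × ℝ → ℂ) (p : ℝ × ℝ × ℝ) : ℂ := fderiv ℝ f p (1, 0, 0)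

/-- Partial derivative in the `y` direction of a function on `ℝ³`. -/
noncomputable def pdy3 (f : ℝ × ℝ × ℝ → ℂ) (p : ℝ × ℝ × ℝ) : ℂ := fderiv ℝ f p (0, 1, 0)

/-- Partial derivative in the `z` direction of a function on `ℝ³`. -/
noncomputable def pdz3 (f : ℝ × ℝ × ℝ → ℂ) (p : ℝ × ℝ × ℝ) : ℂ := fderiv ℝ f p (0, 0, 1)

/-- Planar Laplacian `Δ₂ = ∂ₓₓ + ∂_yy` of a function on `ℝ³`. -/
noncomputable def lap2 (f : ℝ × ℝ × ℝ → ℂ) (p : ℝ × ℝ × ℝ) : ℂ :=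
  pdx3 (fun q => pdx3 f q) p + pdy3 (fun q => pdy3 f q) p

/-- **The coupled (α, w) system.** If `𝐮 = (u, v, w)` is a C³ solution of
`μΔ𝐮 + (λ+μ)∇(div 𝐮) + ω²𝐮 = −𝐟` in an open set `Ω ⊆ ℝ³`, then `α = div₂(u, v)` and `w`
satisfy the coupled system `(λ+2μ)Δ₂α + μ∂_zz α + ω²α + (λ+μ)Δ₂(∂_z w) = −div₂(f₁, f₂)`
and `(λ+μ)∂_z α + (λ+2μ)∂_zz w + μΔ₂w + ω²w = −f₃` in `Ω`. -/
theorem alpha_w_system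
    (lam mu om : ℝ) (hmu : 0 < mu) (hlm : 0 < lam + 2*mu)
    (Ω : Set (ℝ × ℝ × ℝ)) (hΩ : IsOpen Ω)
    (u v w f₁ f₂ f₃ : ℝ × ℝ × ℝ → ℂ)
    (hu : ContDiffOn ℝ 3 u Ω) (hv : ContDiffOn ℝ 3 v Ω) (hw : ContDiffOn ℝ 3 w Ω)
    (hf₁ : ContDiffOn ℝ 1 f₁ Ω) (hf₂ : ContDiffOn ℝ 1 f₂ Ω) (hf₃ : ContDiffOn ℝ 1 f₃ Ω)
    (helas1 : ∀ p ∈ Ω,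
        (mu:ℂ) * (pdx3 (fun q => pdx3 u q) p + pdy3 (fun q => pdy3 u q) p
            + pdz3 (fun q => pdz3 u q) p)
        + ((lam:ℂ)+(mu:ℂ)) * pdx3 (fun q => pdx3 u q + pdy3 v q + pdz3 w q) p
        + (om:ℂ)^2 * u p = -(f₁ p))
    (helas2 : ∀ p ∈ Ω,
        (mu:ℂ) * (pdx3 (fun q => pdx3 v q) p + pdy3 (fun q => pdy3 v q) p
            + pdz3 (fun q => pdz3 v q) p)
        + ((lam:ℂ)+(mu:ℂ)) * pdy3 (fun q => pdx3 u q + pdy3 v q + pdz3 w q) p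
        + (om:ℂ)^2 * v p = -(f₂ p))
    (helas3 : ∀ p ∈ Ω,
        (mu:ℂ) * (pdx3 (fun q => pdx3 w q) p + pdy3 (fun q => pdy3 w q) p
            + pdz3 (fun q => pdz3 w q) p)
        + ((lam:ℂ)+(mu:ℂ)) * pdz3 (fun q => pdx3 u q + pdy3 v q + pdz3 w q) p
        + (om:ℂ)^2 * w p = -(f₃ p))
    (α : ℝ × ℝ × ℝ → ℂ) (hα : α = fun q => pdx3 u q + pdy3 v q) :
    ∀ p ∈ Ω,
      (((lam:ℂ)+2*(mu:ℂ)) * lap2 α p + (mu:ℂ) * pdz3 (fun q => pdz3 α q) p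
          + (om:ℂ)^2 * α p + ((lam:ℂ)+(mu:ℂ)) * lap2 (fun q => pdz3 w q) p
        = -(pdx3 f₁ p + pdy3 f₂ p))
      ∧ (((lam:ℂ)+(mu:ℂ)) * pdz3 α p + ((lam:ℂ)+2*(mu:ℂ)) * pdz3 (fun q => pdz3 w q) p
          + (mu:ℂ) * lap2 w p + (om:ℂ)^2 * w p = -(f₃ p)) := by
  subst hα
  intro p hp
  simp only [pdx3, pdy3, pdz3, lap2] at helas1 helas2 helas3 ⊢
  -- direction vectors
  set ex : ℝ × ℝ × ℝ := ((1:ℝ), (0:ℝ), (0:ℝ)) with hex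
  set ey : ℝ × ℝ × ℝ := ((0:ℝ), (1:ℝ), (0:ℝ)) with hey
  set ez : ℝ × ℝ × ℝ := ((0:ℝ), (0:ℝ), (1:ℝ)) with hez
  -- smoothness facts
  have hu3 : ∀ q ∈ Ω, ContDiffAt ℝ 3 u q := fun q hq => hu.contDiffAt (hΩ.mem_nhds hq)
  have hv3 : ∀ q ∈ Ω, ContDiffAt ℝ 3 v q := fun q hq => hv.contDiffAt (hΩ.mem_nhds hq)
  have hw3 : ∀ q ∈ Ω, ContDiffAt ℝ 3 w q := fun q hq => hw.contDiffAt (hΩ.mem_nhds hq)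
  -- second-derivative differentiability at p
  have d2 : ∀ (f : ℝ × ℝ × ℝ → ℂ), (∀ q ∈ Ω, ContDiffAt ℝ 3 f q) → ∀ a b : ℝ × ℝ × ℝ,
      DifferentiableAt ℝ (fun r => fderiv ℝ (fun s => fderiv ℝ f s a) r b) p :=
    fun f hf a b => (cd1_of_cd2 (cd2_of_cd3 (hf p hp) a) b).differentiableAt (by norm_num)
  have d0 : ∀ (f : ℝ × ℝ × ℝ → ℂ), (∀ q ∈ Ω, ContDiffAt ℝ 3 f q) →
      DifferentiableAt ℝ f p :=
    fun f hf => (hf p hp).differentiableAt (by norm_num)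
  -- the divergence function is C² at p and its first partials are differentiable
  have cd2d : ContDiffAt ℝ 2
      (fun r => fderiv ℝ u r ex + fderiv ℝ v r ey + fderiv ℝ w r ez) p :=
    ((cd2_of_cd3 (hu3 p hp) ex).add (cd2_of_cd3 (hv3 p hp) ey)).add (cd2_of_cd3 (hw3 p hp) ez)
  have dd : ∀ a : ℝ × ℝ × ℝ, DifferentiableAt ℝ
      (fun r => fderiv ℝ (fun s => fderiv ℝ u s ex + fderiv ℝ v s ey + fderiv ℝ w s ez) r a)
      p :=
    fun a => (cd1_of_cd2 cd2d a).differentiableAt (by norm_num)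
  -- derivative of equation 1 in the x direction
  have h1 := pd_congr_on hΩ hp (fun q hq => helas1 q hq) ex
  have E1x := ((pd_elas _ _ _ (d2 u hu3 ex ex) (d2 u hu3 ey ey) (d2 u hu3 ez ez)
      (dd ex) (d0 u hu3) ex).symm.trans h1).trans (pd_neg f₁ p ex)
  -- derivative of equation 2 in the y direction
  have h2 := pd_congr_on hΩ hp (fun q hq => helas2 q hq) ey
  have E2y := ((pd_elas _ _ _ (d2 v hv3 ex ex) (d2 v hv3 ey ey) (d2 v hv3 ez ez)
      (dd ey) (d0 v hv3) ey).symm.trans h2).trans (pd_neg f₂ p ey)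
  have E3 := helas3 p hp
  -- splitting of the derivatives of the divergence
  have cα2 : ∀ q ∈ Ω, ContDiffAt ℝ 2 (fun r => fderiv ℝ u r ex + fderiv ℝ v r ey) q :=
    fun q hq => (cd2_of_cd3 (hu3 q hq) ex).add (cd2_of_cd3 (hv3 q hq) ey)
  have cwz2 : ∀ q ∈ Ω, ContDiffAt ℝ 2 (fun r => fderiv ℝ w r ez) q :=
    fun q hq => cd2_of_cd3 (hw3 q hq) ez
  have hdx : fderiv ℝ (fun q => fderiv ℝ
        (fun r => fderiv ℝ u r ex + fderiv ℝ v r ey + fderiv ℝ w r ez) q ex) p ex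
      = fderiv ℝ (fun q => fderiv ℝ (fun r => fderiv ℝ u r ex + fderiv ℝ v r ey) q ex) p ex
        + fderiv ℝ (fun q => fderiv ℝ (fun r => fderiv ℝ w r ez) q ex) p ex :=
    pd2_add hΩ cα2 cwz2 hp ex ex
  have hdy : fderiv ℝ (fun q => fderiv ℝ
        (fun r => fderiv ℝ u r ex + fderiv ℝ v r ey + fderiv ℝ w r ez) q ey) p ey
      = fderiv ℝ (fun q => fderiv ℝ (fun r => fderiv ℝ u r ex + fderiv ℝ v r ey) q ey) p ey
        + fderiv ℝ (fun q => fderiv ℝ (fun r => fderiv ℝ w r ez) q ey) p ey :=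
    pd2_add hΩ cα2 cwz2 hp ey ey
  have hdz : fderiv ℝ
        (fun r => fderiv ℝ u r ex + fderiv ℝ v r ey + fderiv ℝ w r ez) p ez
      = fderiv ℝ (fun r => fderiv ℝ u r ex + fderiv ℝ v r ey) p ez
        + fderiv ℝ (fun r => fderiv ℝ w r ez) p ez :=
    pd_add ((cα2 p hp).differentiableAt (by norm_num))
      ((cwz2 p hp).differentiableAt (by norm_num)) ez
  -- splitting of the second derivatives of α
  have cu2 : ∀ q ∈ Ω, ContDiffAt ℝ 2 (fun r => fderiv ℝ u r ex) q :=
    fun q hq => cd2_of_cd3 (hu3 q hq) ex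
  have cv2 : ∀ q ∈ Ω, ContDiffAt ℝ 2 (fun r => fderiv ℝ v r ey) q :=
    fun q hq => cd2_of_cd3 (hv3 q hq) ey
  have hαxx : fderiv ℝ (fun q => fderiv ℝ
        (fun r => fderiv ℝ u r ex + fderiv ℝ v r ey) q ex) p ex
      = fderiv ℝ (fun q => fderiv ℝ (fun r => fderiv ℝ u r ex) q ex) p ex
        + fderiv ℝ (fun q => fderiv ℝ (fun r => fderiv ℝ v r ey) q ex) p ex :=
    pd2_add hΩ cu2 cv2 hp ex ex
  have hαyy : fderiv ℝ (fun q => fderiv ℝ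
        (fun r => fderiv ℝ u r ex + fderiv ℝ v r ey) q ey) p ey
      = fderiv ℝ (fun q => fderiv ℝ (fun r => fderiv ℝ u r ex) q ey) p ey
        + fderiv ℝ (fun q => fderiv ℝ (fun r => fderiv ℝ v r ey) q ey) p ey :=
    pd2_add hΩ cu2 cv2 hp ey ey
  have hαzz : fderiv ℝ (fun q => fderiv ℝ
        (fun r => fderiv ℝ u r ex + fderiv ℝ v r ey) q ez) p ez
      = fderiv ℝ (fun q => fderiv ℝ (fun r => fderiv ℝ u r ex) q ez) p ez
        + fderiv ℝ (fun q => fderiv ℝ (fun r => fderiv ℝ v r ey) q ez) p ez :=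
    pd2_add hΩ cu2 cv2 hp ez ez
  -- commutation of third derivatives
  have c1 := T_rot hΩ hv3 hp ey ex
  have c2 := T_rot hΩ hu3 hp ex ey
  have c3 := T_rot hΩ hu3 hp ex ez
  have c4 := T_rot hΩ hv3 hp ey ez
  constructor
  · linear_combination E1x + E2y - ((lam:ℂ)+(mu:ℂ)) * hdx - ((lam:ℂ)+(mu:ℂ)) * hdy
      + (mu:ℂ) * hαxx + (mu:ℂ) * hαyy + (mu:ℂ) * hαzz
      + (mu:ℂ) * c1 + (mu:ℂ) * c2 + (mu:ℂ) * c3 + (mu:ℂ) * c4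
  · linear_combination E3 - ((lam:ℂ)+(mu:ℂ)) * hdz
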